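/- Lie derivative commutes with jet prolongation: for a projectable vector field (Ξ, ξ) and a section γ, the s-jet prolongation of the Lie derivative equals the Lie derivative (with respect to the prolonged vector field j_s Ξ) of the prolonged section: j_s(£_Ξ γ) = £_{j_s Ξ}(j_s γ), under the canonical identification V J_s Y ≅ J_s V Y. (It suffices to verify this in coordinates for s = 1.) -/

import Mathlib

noncomputable def pd {n : ℕ} (σ : Fin n) (g : (Fin n → ℝ) → ℝ) : (Fin n → ℝ) → ℝ :=
  fun x => fderiv ℝ g x (Pi.single σ 1)

private lemma pd_contDiff {n : ℕ} {g : (Fin n → ℝ) → ℝ} (hg : ContDiff ℝ (⊤ : ℕ∞) g)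
    (μ : Fin n) : ContDiff ℝ (⊤ : ℕ∞) (pd μ g) :=
  (hg.fderiv_right (by simp)).clm_apply contDiff_const

private lemma pd_comm {n : ℕ} {g : (Fin n → ℝ) → ℝ} (hg : ContDiff ℝ (⊤ : ℕ∞) g)
    (σ μ : Fin n) (x : Fin n → ℝ) : pd σ (pd μ g) x = pd μ (pd σ g) x := by
  have hd : Differentiable ℝ (fderiv ℝ g) :=
    (hg.fderiv_right (m := (⊤:ℕ∞)) (by norm_cast)).differentiable (by norm_cast)
  have key : ∀ a b : Fin n, pd a (pd b g) x
      = fderiv ℝ (fderiv ℝ g) x (Pi.single a 1) (Pi.single b 1) := by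
    intro a b
    have h1 : pd b g = fun z => (fderiv ℝ g z) (Pi.single b 1) := rfl
    rw [pd, h1, fderiv_clm_apply (hd x) (differentiableAt_const _)]
    simp
  rw [key, key]
  exact (hg.contDiffAt.isSymmSndFDerivAt (by simp only [minSmoothness_of_isRCLikeNormedField]; exact WithTop.coe_le_coe.mpr le_top)) _ _

private lemma pd_sub {n : ℕ} {f g : (Fin n → ℝ) → ℝ} {x : Fin n → ℝ}
    (hf : DifferentiableAt ℝ f x) (hg : DifferentiableAt ℝ g x) (σ : Fin n) :
    pd σ (fun z => f z - g z) x = pd σ f x - pd σ g x := by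
  simp only [pd]
  rw [fderiv_fun_sub hf hg]
  simp

private lemma pd_sum {n : ℕ} {ι : Type*} {s : Finset ι} {f : ι → (Fin n → ℝ) → ℝ}
    {x : Fin n → ℝ} (h : ∀ μ ∈ s, DifferentiableAt ℝ (f μ) x) (σ : Fin n) :
    pd σ (fun z => ∑ μ ∈ s, f μ z) x = ∑ μ ∈ s, pd σ (f μ) x := by
  simp only [pd]
  rw [fderiv_fun_sum h]
  simp

private lemma pd_mul {n : ℕ} {f g : (Fin n → ℝ) → ℝ} {x : Fin n → ℝ}
    (hf : DifferentiableAt ℝ f x) (hg : DifferentiableAt ℝ g x) (σ : Fin n) :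
    pd σ (fun z => f z * g z) x = f x * pd σ g x + g x * pd σ f x := by
  simp only [pd]
  rw [fderiv_fun_mul hf hg]
  simp [smul_eq_mul]

theorem lie_derivative_commutes_with_prolongation {n m : ℕ}
    (ξ : (Fin n → ℝ) → Fin n → ℝ) (hξ : ContDiff ℝ (⊤ : ℕ∞) ξ)
    (Ξ : (Fin n → ℝ) × (Fin m → ℝ) → Fin m → ℝ) (hΞ : ContDiff ℝ (⊤ : ℕ∞) Ξ)
    (γ : (Fin n → ℝ) → Fin m → ℝ) (hγ : ContDiff ℝ (⊤ : ℕ∞) γ)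
    (x : Fin n → ℝ) (σ : Fin n) (i : Fin m) :
    pd σ (fun z => (∑ μ, ξ z μ * pd μ (fun w => γ w i) z) - Ξ (z, γ z) i) x
      = (∑ μ, ξ x μ * pd μ (fun z => pd σ (fun w => γ w i) z) x)
        - (fderiv ℝ (fun q : (Fin n → ℝ) × (Fin m → ℝ) => Ξ q i) (x, γ x)
             (Pi.single σ 1, 0)
           + (∑ j, pd σ (fun z => γ z j) x
               * fderiv ℝ (fun q : (Fin n → ℝ) × (Fin m → ℝ) => Ξ q i) (x, γ x)
                   (0, Pi.single j 1))
           - ∑ μ, pd μ (fun w => γ w i) x * pd σ (fun z => ξ z μ) x) := by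
  classical
  have hγj : ∀ j : Fin m, ContDiff ℝ (⊤:ℕ∞) (fun w => γ w j) := fun j =>
    (ContinuousLinearMap.proj (R := ℝ) (φ := fun _ : Fin m => ℝ) j).contDiff.comp hγ
  have hξμ : ∀ μ : Fin n, ContDiff ℝ (⊤:ℕ∞) (fun z => ξ z μ) := fun μ =>
    (ContinuousLinearMap.proj (R := ℝ) (φ := fun _ : Fin n => ℝ) μ).contDiff.comp hξ
  have hΞi : ContDiff ℝ (⊤:ℕ∞) (fun q : (Fin n → ℝ) × (Fin m → ℝ) => Ξ q i) :=
    (ContinuousLinearMap.proj (R := ℝ) (φ := fun _ : Fin m => ℝ) i).contDiff.comp hΞ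
  have hF : ContDiff ℝ (⊤:ℕ∞) (fun z => ∑ μ, ξ z μ * pd μ (fun w => γ w i) z) :=
    ContDiff.sum fun μ _ => (hξμ μ).mul (pd_contDiff (hγj i) μ)
  have hG : ContDiff ℝ (⊤:ℕ∞) (fun z => Ξ (z, γ z) i) :=
    hΞi.comp (contDiff_id.prodMk hγ)
  have hγd : DifferentiableAt ℝ γ x := (hγ.differentiable (by norm_cast)) x
  have hΦd : DifferentiableAt ℝ (fun q : (Fin n → ℝ) × (Fin m → ℝ) => Ξ q i) (x, γ x) :=
    (hΞi.differentiable (by norm_cast)) (x, γ x)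
  have hterm : ∀ μ : Fin n,
      DifferentiableAt ℝ (fun z => ξ z μ * pd μ (fun w => γ w i) z) x := fun μ =>
    (((hξμ μ).differentiable (by norm_cast)) x).mul
      (((pd_contDiff (hγj i) μ).differentiable (by norm_cast)) x)
  -- split the difference
  rw [pd_sub ((hF.differentiable (by norm_cast)) x) ((hG.differentiable (by norm_cast)) x)]
  -- value on the first summand
  have hFval : pd σ (fun z => ∑ μ, ξ z μ * pd μ (fun w => γ w i) z) x
      = (∑ μ, ξ x μ * pd μ (fun z => pd σ (fun w => γ w i) z) x)
        + ∑ μ, pd μ (fun w => γ w i) x * pd σ (fun z => ξ z μ) x := by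
    rw [pd_sum (fun μ _ => hterm μ)]
    have h1 : ∀ μ : Fin n, pd σ (fun z => ξ z μ * pd μ (fun w => γ w i) z) x
        = ξ x μ * pd μ (fun z => pd σ (fun w => γ w i) z) x
          + pd μ (fun w => γ w i) x * pd σ (fun z => ξ z μ) x := by
      intro μ
      rw [pd_mul (((hξμ μ).differentiable (by norm_cast)) x)
        (((pd_contDiff (hγj i) μ).differentiable (by norm_cast)) x)]
      rw [pd_comm (hγj i) σ μ x]
    rw [Finset.sum_congr rfl fun μ _ => h1 μ, Finset.sum_add_distrib]
  -- value on the second summand (chain rule)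
  have hsum : ∀ v : Fin m → ℝ, ∑ j, v j • (Pi.single j 1 : Fin m → ℝ) = v := by
    intro v; funext k
    simp [Pi.single_apply, Finset.sum_ite_eq', mul_comm]
  have hv : fderiv ℝ γ x (Pi.single σ 1) = fun j => pd σ (fun z => γ z j) x := by
    funext j
    have hc : (fun z => γ z j)
        = (ContinuousLinearMap.proj (R := ℝ) (φ := fun _ : Fin m => ℝ) j) ∘ γ := rfl
    rw [pd, hc, fderiv_comp x
      (ContinuousLinearMap.proj (R := ℝ) (φ := fun _ : Fin m => ℝ) j).differentiableAt hγd]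
    simp
  have hGval : pd σ (fun z => Ξ (z, γ z) i) x
      = fderiv ℝ (fun q : (Fin n → ℝ) × (Fin m → ℝ) => Ξ q i) (x, γ x) (Pi.single σ 1, 0)
        + ∑ j, pd σ (fun z => γ z j) x
            * fderiv ℝ (fun q : (Fin n → ℝ) × (Fin m → ℝ) => Ξ q i) (x, γ x)
                (0, Pi.single j 1) := by
    have hcomp : (fun z => Ξ (z, γ z) i)
        = (fun q : (Fin n → ℝ) × (Fin m → ℝ) => Ξ q i) ∘ (fun z => (z, γ z)) := rfl
    rw [pd, hcomp, fderiv_comp x hΦd (differentiableAt_fun_id.prodMk hγd)]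
    rw [ContinuousLinearMap.comp_apply, DifferentiableAt.fderiv_prodMk differentiableAt_fun_id hγd]
    rw [ContinuousLinearMap.prod_apply, fderiv_id', ContinuousLinearMap.id_apply, hv]
    set Φ' := fderiv ℝ (fun q : (Fin n → ℝ) × (Fin m → ℝ) => Ξ q i) (x, γ x) with hΦ'
    have hdec : ((Pi.single σ 1 : Fin n → ℝ), (fun j => pd σ (fun z => γ z j) x : Fin m → ℝ))
        = ((Pi.single σ 1 : Fin n → ℝ), (0 : Fin m → ℝ))
          + ∑ j, (pd σ (fun z => γ z j) x)
              • ((0 : Fin n → ℝ), (Pi.single j 1 : Fin m → ℝ)) := by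
      rw [Prod.ext_iff]
      constructor
      · simp [Prod.fst_sum]
      · simp [Prod.snd_sum, hsum]
    rw [hdec, map_add, map_sum]
    congr 1
    refine Finset.sum_congr rfl fun j _ => ?_
    rw [map_smul, smul_eq_mul]
  rw [hFval, hGval]
  ring
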